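/- Let G be a quasi-regularizable finite simple graph of order n ≥ 2 with independence number α. Then s_{⌈(n−1)/3⌉} ≥ s_{⌈(n−1)/3⌉ + 1} ≥ ⋯ ≥ s_α; that is, s_k ≥ s_{k+1} for every k with ⌈(n−1)/3⌉ ≤ k < α. -/

import Mathlib

open Finset
open scoped Classical

variable {V : Type*}

/-- `S` is an independent set in `G`: its vertices are pairwise non-adjacent. -/
def IsIndepSet (G : SimpleGraph V) (S : Finset V) : Prop :=
  ∀ ⦃u⦄, u ∈ S → ∀ ⦃v⦄, v ∈ S → ¬ G.Adj u v

/-- The neighborhood `N(S)`: all vertices having at least one neighbor in `S`. -/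
noncomputable def neigh [Fintype V] (G : SimpleGraph V) (S : Finset V) : Finset V :=
  Finset.univ.filter fun v => ∃ u ∈ S, G.Adj u v

/-- The independence number `α(G)`: the maximum size of an independent set. -/
noncomputable def indepNum [Fintype V] (G : SimpleGraph V) : ℕ :=
  (Finset.univ.filter fun S : Finset V => IsIndepSet G S).sup Finset.card

/-- `s_k`: the number of independent sets of size `k` in `G`. -/
noncomputable def indepCount [Fintype V] (G : SimpleGraph V) (k : ℕ) : ℕ :=
  (Finset.univ.filter fun S : Finset V => IsIndepSet G S ∧ S.card = k).card

/-- A maximal independent set (not properly contained in another independent set). -/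
def IsMaximalIndepSet (G : SimpleGraph V) (S : Finset V) : Prop :=
  IsIndepSet G S ∧ ∀ T : Finset V, IsIndepSet G T → S ⊆ T → S = T

/-- `G` is well-covered: all maximal independent sets have the same cardinality. -/
def IsWellCovered (G : SimpleGraph V) : Prop :=
  ∀ S T : Finset V, IsMaximalIndepSet G S → IsMaximalIndepSet G T → S.card = T.card

/-- `G` is 1-well-covered: it is well-covered, has at least two vertices, and
deleting any vertex leaves a well-covered graph. -/
def IsOneWellCovered [Fintype V] (G : SimpleGraph V) : Prop :=
  IsWellCovered G ∧ 2 ≤ Fintype.card V ∧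
    ∀ v : V, IsWellCovered (G.induce ({v}ᶜ : Set V))

/-- The corona `H ∘ K₂`: for each vertex `v` of `H`, two new vertices
(`(v, false)` and `(v, true)`) adjacent to each other and to `v` are added. -/
def corona2 (H : SimpleGraph V) : SimpleGraph (V ⊕ V × Bool) :=
  SimpleGraph.fromRel fun x y =>
    match x, y with
    | Sum.inl u, Sum.inl v => H.Adj u v
    | Sum.inl u, Sum.inr (v, _) => u = v
    | Sum.inr (u, _), Sum.inr (v, _) => u = v
    | _, _ => False

/-- If `G` is a quasi-regularizable graph of order `n ≥ 2` with
independence number `α`, then `s_{⌈(n−1)/3⌉} ≥ s_{⌈(n−1)/3⌉+1} ≥ ⋯ ≥ s_α`. -/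
theorem stmt_3 {V : Type*} [Fintype V] (G : SimpleGraph V) (n : ℕ)
    (hn : Fintype.card V = n) (hn2 : 2 ≤ n) (alpha : ℕ) (ha : alpha = indepNum G)
    (hqr : ∀ S : Finset V, IsIndepSet G S → S.card ≤ (neigh G S).card) :
    ∀ k : ℕ, (n - 1 + 2) / 3 ≤ k → k < alpha →
      indepCount G (k + 1) ≤ indepCount G k := by
  classical
  intro k hk1 hk2
  have hn3 : n ≤ 3 * k + 1 := by
    have h1 : (n + 1) / 3 ≤ k := by
      have he : n - 1 + 2 = n + 1 := by omega
      rwa [he] at hk1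
    have h2 : n + 1 < (k + 1) * 3 := (Nat.div_lt_iff_lt_mul (by norm_num)).mp (Nat.lt_succ_of_le h1)
    omega
  set Sk := univ.filter (fun S : Finset V => IsIndepSet G S ∧ S.card = k) with hSk
  set Sk1 := univ.filter (fun S : Finset V => IsIndepSet G S ∧ S.card = k + 1) with hSk1
  have key : Sk1.card * (k+1) ≤ Sk.card * (k+1) := by
    have hP : (Sk1.sigma (fun A => (A : Finset V))).card = Sk1.card * (k+1) := by
      rw [Finset.card_sigma, Finset.sum_congr rfl (fun A hA => (Finset.mem_filter.mp hA).2.2),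
        Finset.sum_const, smul_eq_mul]
    have hmap : ∀ x ∈ Sk1.sigma (fun A => (A : Finset V)), x.1.erase x.2 ∈ Sk := by
      intro x hx
      rw [Finset.mem_sigma] at hx
      obtain ⟨hA, hv⟩ := hx
      rw [Finset.mem_filter] at hA ⊢
      refine ⟨Finset.mem_univ _, fun u hu w hw =>
        hA.2.1 (Finset.mem_of_mem_erase hu) (Finset.mem_of_mem_erase hw), ?_⟩
      rw [Finset.card_erase_of_mem hv, hA.2.2]; omega

    have hfib : ∀ B ∈ Sk,
        ((Sk1.sigma fun A => (A : Finset V)).filter (fun x => x.1.erase x.2 = B)).card ≤ k + 1 := by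
      intro B hB
      rw [Finset.mem_filter] at hB
      obtain ⟨-, hBi, hBc⟩ := hB
      have hsub : ((Sk1.sigma fun A => (A : Finset V)).filter (fun x => x.1.erase x.2 = B)).card
          ≤ (univ \ (B ∪ neigh G B)).card := by
        apply Finset.card_le_card_of_injOn (fun x => x.2)
        · intro x hx
          rw [Finset.mem_coe, Finset.mem_filter, Finset.mem_sigma, Finset.mem_filter] at hx
          obtain ⟨⟨⟨-, hAi, hAc⟩, hv⟩, hE⟩ := hx
          rw [Finset.mem_coe, Finset.mem_sdiff]
          refine ⟨Finset.mem_univ _, ?_⟩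
          rw [Finset.mem_union]
          rintro (h | h)
          · rw [← hE] at h
            exact (Finset.notMem_erase _ _) h
          · rw [neigh, Finset.mem_filter] at h
            obtain ⟨-, u, hu, hadj⟩ := h
            have hu' : u ∈ x.1 := by
              rw [← hE] at hu; exact Finset.mem_of_mem_erase hu
            exact hAi hu' hv hadj
        · intro x hx y hy hxy
          simp only [Finset.mem_coe, Finset.mem_filter, Finset.mem_sigma] at hx hy
          have hx1 : x.1 = insert x.2 B := by
            rw [← hx.2, Finset.insert_erase hx.1.2]
          have hy1 : y.1 = insert y.2 B := by
            rw [← hy.2, Finset.insert_erase hy.1.2]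
          have hxy' : x.2 = y.2 := hxy
          have h1 : x.1 = y.1 := by rw [hx1, hy1, hxy']
          exact Sigma.ext h1 (heq_of_eq hxy')
      have hdisj : Disjoint B (neigh G B) := by
        rw [Finset.disjoint_left]
        intro v hvB hvN
        rw [neigh, Finset.mem_filter] at hvN
        obtain ⟨-, u, hu, hadj⟩ := hvN
        exact hBi hu hvB hadj
      have hcardN : k ≤ (neigh G B).card := hBc ▸ hqr B hBi
      have hcardU : (univ \ (B ∪ neigh G B)).card = n - (B ∪ neigh G B).card := by
        rw [Finset.card_sdiff_of_subset (Finset.subset_univ _), Finset.card_univ, hn]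
      have hcardUn : (B ∪ neigh G B).card = k + (neigh G B).card := by
        rw [Finset.card_union_of_disjoint hdisj, hBc]
      omega
    calc Sk1.card * (k+1) = (Sk1.sigma fun A => (A : Finset V)).card := hP.symm
      _ = ∑ B ∈ Sk, ((Sk1.sigma fun A => (A : Finset V)).filter (fun x => x.1.erase x.2 = B)).card :=
          Finset.card_eq_sum_card_fiberwise hmap
      _ ≤ ∑ B ∈ Sk, (k+1) := Finset.sum_le_sum hfib
      _ = Sk.card * (k+1) := by rw [Finset.sum_const, smul_eq_mul]
  have := Nat.le_of_mul_le_mul_right key (Nat.succ_pos k)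
  simpa [indepCount, hSk, hSk1] using this
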